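/- (Monotonicity identity for sn_κ^{n−1} F' and positivity of F') Let κ ≤ 0, let n ≥ 2 be an integer, and let F solve the ODE of the paper with F(0) = 0, F'(0) = 1, and F > 0 on (0,∞). Then for every r > 0 one has d/dr ( sn_κ(r)^{n−1} F'(r) ) = (n−1) sn_κ(r)^{n−3} F(r) > 0; consequently sn_κ(r)^{n−1} F'(r) is strictly increasing on (0,∞) and F'(r) > 0 for every r > 0. -/

import Mathlib

open Set

/-- The comparison sine function `sn_κ` for `κ ≤ 0`: `sn_0(t) = t` and
`sn_κ(t) = sinh(√(-κ) t)/√(-κ)` for `κ < 0`. -/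
noncomputable def snk (κ : ℝ) (t : ℝ) : ℝ :=
  if κ = 0 then t else Real.sinh (Real.sqrt (-κ) * t) / Real.sqrt (-κ)

lemma snk_hasDerivAt' (κ : ℝ) (hκ : κ ≤ 0) (r : ℝ) :
    HasDerivAt (snk κ) (if κ = 0 then 1 else Real.cosh (Real.sqrt (-κ) * r)) r := by
  by_cases h : κ = 0
  · simp only [h, if_true]
    have : snk 0 = fun t => t := by funext t; simp [snk]
    rw [this]; exact hasDerivAt_id r
  · have ha : 0 < Real.sqrt (-κ) := Real.sqrt_pos.2 (by cases lt_or_eq_of_le hκ with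
      | inl h' => linarith
      | inr h' => exact absurd h' h)
    set a := Real.sqrt (-κ)
    have h1 : HasDerivAt (fun t => a * t) a r := by
      simpa using (hasDerivAt_id r).const_mul a
    have h2 := (h1.sinh).div_const a
    have he : snk κ = fun t => Real.sinh (a * t) / a := by funext t; simp [snk, h]; rfl
    simp only [h, if_false]
    rw [he]
    exact h2.congr_deriv (mul_div_cancel_right₀ _ ha.ne')

lemma snk_pos' (κ : ℝ) (hκ : κ ≤ 0) {r : ℝ} (hr : 0 < r) : 0 < snk κ r := by
  by_cases h : κ = 0
  · simpa [snk, h] using hr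
  · have ha : 0 < Real.sqrt (-κ) := Real.sqrt_pos.2 (by cases lt_or_eq_of_le hκ with
      | inl h' => linarith
      | inr h' => exact absurd h' h)
    simp only [snk, h, if_false]
    exact div_pos (Real.sinh_pos_iff.2 (mul_pos ha hr)) ha

/-- Monotonicity identity for `sn_κ^{n-1} F'` and positivity of `F'`:
`(sn_κ^{n-1} F')'(r) = (n-1) sn_κ(r)^{n-3} F(r) > 0`, so `sn_κ^{n-1} F'` is strictly
increasing on `(0,∞)` and `F' > 0` on `(0,∞)`. -/
theorem snk_pow_mul_deriv_strictMono
    (κ : ℝ) (hκ : κ ≤ 0) (n : ℕ) (hn : 2 ≤ n) (F : ℝ → ℝ)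
    (hFc : ContinuousOn F (Ici 0))
    (hF2 : ContDiffOn ℝ 2 F (Ioi 0))
    (hF0 : F 0 = 0)
    (hF'0 : HasDerivWithinAt F 1 (Ici 0) 0)
    (hODE : ∀ r > 0, deriv (deriv F) r
      + ((n : ℝ) - 1) * (deriv (snk κ) r / snk κ r) * deriv F r
      - (((n : ℝ) - 1) / (snk κ r) ^ 2) * F r = 0)
    (hFpos : ∀ r > 0, 0 < F r) :
    (∀ r > 0, HasDerivAt (fun s => snk κ s ^ (n - 1) * deriv F s)
        (((n : ℝ) - 1) * snk κ r ^ ((n : ℝ) - 3) * F r) r ∧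
      0 < ((n : ℝ) - 1) * snk κ r ^ ((n : ℝ) - 3) * F r) ∧
    StrictMonoOn (fun s => snk κ s ^ (n - 1) * deriv F s) (Ioi 0) ∧
    ∀ r > 0, 0 < deriv F r := by
  -- second derivative exists on Ioi 0
  have hF1 : ContDiffOn ℝ 1 (deriv F) (Ioi 0) := by
    have h := (contDiffOn_succ_iff_deriv_of_isOpen (n := 1) isOpen_Ioi).1
      (by exact_mod_cast hF2)
    exact h.2.2
  have hF'diff : ∀ r > (0:ℝ), HasDerivAt (deriv F) (deriv (deriv F) r) r := by
    intro r hr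
    have : DifferentiableAt ℝ (deriv F) r :=
      (hF1.differentiableOn (by norm_num)).differentiableAt (isOpen_Ioi.mem_nhds hr)
    exact this.hasDerivAt
  -- key derivative fact for each r > 0
  have hkey : ∀ r > (0:ℝ), HasDerivAt (fun s => snk κ s ^ (n - 1) * deriv F s)
      (((n : ℝ) - 1) * snk κ r ^ ((n : ℝ) - 3) * F r) r := by
    intro r hr
    have hs : 0 < snk κ r := snk_pos' κ hκ hr
    have hsn0 := snk_hasDerivAt' κ hκ r
    have hsn : HasDerivAt (snk κ) (deriv (snk κ) r) r := hsn0.differentiableAt.hasDerivAt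
    have hpow := hsn.pow (n - 1)
    have hprod := hpow.mul (hF'diff r hr)
    -- rewrite derivative value using the ODE
    refine hprod.congr_deriv ?_
    rw [Pi.pow_apply]
    have hode := hODE r hr
    set s := snk κ r
    set s' := deriv (snk κ) r with hs'def
    set f := F r
    set f' := deriv F r
    set f'' := deriv (deriv F) r
    have hf'' : f'' = ((n:ℝ) - 1) / s ^ 2 * f - ((n:ℝ) - 1) * (s' / s) * f' := by
      linarith [hode]
    have hrpow : s ^ ((n:ℝ) - 3) = s ^ (n - 1) / s ^ 2 := by
      rw [eq_div_iff (pow_ne_zero 2 hs.ne'), ← Real.rpow_natCast s (n - 1),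
        ← Real.rpow_natCast s 2, ← Real.rpow_add hs]
      congr 1
      push_cast [Nat.cast_sub (by omega : 1 ≤ n)]
      ring
    rw [hrpow, hf'']
    have hcast : ((n - 1 : ℕ) : ℝ) = (n : ℝ) - 1 := by
      push_cast [Nat.cast_sub (by omega : 1 ≤ n)]; ring
    have hpowsub : s ^ (n - 1) = s ^ (n - 1 - 1) * s := by
      rw [← pow_succ]
      congr 1
      omega
    rw [hcast, hpowsub]
    field_simp
    ring
  refine ⟨fun r hr => ⟨hkey r hr, ?_⟩, ?_, ?_⟩
  · have hs : 0 < snk κ r := snk_pos' κ hκ hr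
    have h1 : (0:ℝ) < (n : ℝ) - 1 := by
      have : (2:ℝ) ≤ n := by exact_mod_cast hn
      linarith
    exact mul_pos (mul_pos h1 (Real.rpow_pos_of_pos hs _)) (hFpos r hr)
  · -- strict mono
    apply StrictMonoOn.mono (s := Ioi 0) ?_ (le_refl _)
    apply strictMonoOn_of_deriv_pos (convex_Ioi 0)
    · exact fun x hx => (hkey x hx).differentiableAt.continuousAt.continuousWithinAt
    · intro x hx
      rw [interior_Ioi] at hx
      rw [(hkey x hx).deriv]
      have hs : 0 < snk κ x := snk_pos' κ hκ hx
      have h1 : (0:ℝ) < (n : ℝ) - 1 := by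
        have : (2:ℝ) ≤ n := by exact_mod_cast hn
        linarith
      exact mul_pos (mul_pos h1 (Real.rpow_pos_of_pos hs _)) (hFpos x hx)
  · -- positivity of deriv F
    intro r hr
    by_contra hcon
    push_neg at hcon
    have hmono : StrictMonoOn (fun s => snk κ s ^ (n - 1) * deriv F s) (Ioi 0) := by
      apply strictMonoOn_of_deriv_pos (convex_Ioi 0)
      · exact fun x hx => (hkey x hx).differentiableAt.continuousAt.continuousWithinAt
      · intro x hx
        rw [interior_Ioi] at hx
        rw [(hkey x hx).deriv]
        have hs : 0 < snk κ x := snk_pos' κ hκ hx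
        have h1 : (0:ℝ) < (n : ℝ) - 1 := by
          have : (2:ℝ) ≤ n := by exact_mod_cast hn
          linarith
        exact mul_pos (mul_pos h1 (Real.rpow_pos_of_pos hs _)) (hFpos x hx)
    have hgr0 : snk κ r ^ (n - 1) * deriv F r ≤ 0 :=
      mul_nonpos_of_nonneg_of_nonpos (pow_nonneg (snk_pos' κ hκ hr).le _) hcon
    have hneg : ∀ x ∈ Ioo (0:ℝ) r, deriv F x < 0 := by
      intro x hx
      have hlt : snk κ x ^ (n - 1) * deriv F x < snk κ x ^ (n-1) * 0 := by
        have := hmono hx.1 hr hx.2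
        simp only [mul_zero]
        exact lt_of_lt_of_le this hgr0
      exact lt_of_mul_lt_mul_left (by simpa using hlt) (pow_nonneg (snk_pos' κ hκ hx.1).le _)
    have hanti : StrictAntiOn F (Icc 0 r) := by
      apply strictAntiOn_of_deriv_neg (convex_Icc 0 r)
      · exact hFc.mono (Icc_subset_Ici_self)
      · intro x hx
        rw [interior_Icc] at hx
        exact hneg x hx
    have := hanti (left_mem_Icc.2 hr.le) (right_mem_Icc.2 hr.le) hr
    rw [hF0] at this
    exact absurd (hFpos r hr) (by linarith)
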